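/- arXiv:2109.00647 — 4 statements merged into one kernel-verified Lean document; each statement's English description precedes it below -/
import Mathlib

section
/- The Knaster–Kuratowski fan X is connected. -/
open Set

/-- The apex of the Knaster–Kuratowski fan. -/
noncomputable def kkApex : ℝ × ℝ := (1/2, 1/2)

/-- The Cantor set, viewed inside `[0,1] × {0} ⊆ ℝ²` via first coordinates. -/
noncomputable def kkCantor : Set ℝ := cantorSet

/-- `C₁`: the endpoints of the open intervals removed in the construction of the
Cantor set, i.e. points `x` of the Cantor set which are an endpoint of a maximal
open interval disjoint from the Cantor set with both endpoints in the Cantor set. -/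
def kkEndpoints : Set ℝ :=
  {x | x ∈ cantorSet ∧ ∃ a ∈ cantorSet, ∃ b ∈ cantorSet,
    a < b ∧ Ioo a b ∩ cantorSet = ∅ ∧ (x = a ∨ x = b)}

/-- The Knaster–Kuratowski fan: over endpoints `x ∈ C₁` take the points of the
segment from `(x,0)` to the apex with rational second coordinate, over the other
Cantor points take the points with irrational second coordinate. -/
noncomputable def kkFan : Set (ℝ × ℝ) :=
  ⋃ x ∈ cantorSet, {p ∈ segment ℝ (x, (0:ℝ)) kkApex |
    (x ∈ kkEndpoints ∧ ∃ q : ℚ, p.2 = (q : ℝ)) ∨ (x ∉ kkEndpoints ∧ Irrational p.2)}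

lemma one_mem_cantorSet : (1:ℝ) ∈ cantorSet := by
  refine Set.mem_iInter.mpr fun n => ?_
  induction n with
  | zero => simp
  | succ n ih => exact Or.inr ⟨1, ih, by norm_num⟩

lemma third_mem_cantorSet {x : ℝ} (hx : x ∈ cantorSet) : x / 3 ∈ cantorSet := by
  refine Set.mem_iInter.mpr fun n => ?_
  match n with
  | 0 =>
    obtain ⟨h0, h1⟩ := cantorSet_subset_unitInterval hx
    exact ⟨by linarith, by linarith⟩
  | n + 1 => exact Or.inl ⟨x, Set.mem_iInter.mp hx n, rfl⟩

lemma third_add_mem_cantorSet {x : ℝ} (hx : x ∈ cantorSet) : (2 + x) / 3 ∈ cantorSet := by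
  refine Set.mem_iInter.mpr fun n => ?_
  match n with
  | 0 =>
    obtain ⟨h0, h1⟩ := cantorSet_subset_unitInterval hx
    exact ⟨by linarith, by linarith⟩
  | n + 1 => exact Or.inr ⟨x, Set.mem_iInter.mp hx n, rfl⟩

/-- Self-similarity: any point of the Cantor set is `y/3` or `(2+y)/3` for `y` in the Cantor
set. -/
lemma cantorSet_cases {x : ℝ} (hx : x ∈ cantorSet) :
    (∃ y ∈ cantorSet, x = y / 3) ∨ (∃ y ∈ cantorSet, x = (2 + y) / 3) := by
  by_cases h : x ≤ 1/3
  · left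
    refine ⟨3 * x, Set.mem_iInter.mpr fun n => ?_, by ring⟩
    have hx1 := Set.mem_iInter.mp hx (n + 1)
    rcases hx1 with ⟨y, hy, hyx⟩ | ⟨y, hy, hyx⟩
    · have : y = 3 * x := by field_simp at hyx; linarith
      rwa [← this]
    · obtain ⟨h0, h1⟩ := preCantorSet_subset_unitInterval hy
      exfalso; simp only at hyx; linarith
  · right
    refine ⟨3 * x - 2, Set.mem_iInter.mpr fun n => ?_, by ring⟩
    have hx1 := Set.mem_iInter.mp hx (n + 1)
    rcases hx1 with ⟨y, hy, hyx⟩ | ⟨y, hy, hyx⟩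
    · obtain ⟨h0, h1⟩ := preCantorSet_subset_unitInterval hy
      exfalso; simp only at hyx; linarith
    · have : y = 3 * x - 2 := by simp only at hyx; linarith
      rwa [← this]

lemma cantorSet_inter_middle : Ioo (1/3 : ℝ) (2/3) ∩ cantorSet = ∅ := by
  ext x
  simp only [mem_inter_iff, mem_Ioo, mem_empty_iff_false, iff_false, not_and, and_imp]
  intro h1 h2 hx
  rcases cantorSet_cases hx with ⟨y, hy, rfl⟩ | ⟨y, hy, rfl⟩ <;>
    obtain ⟨h0', h1'⟩ := cantorSet_subset_unitInterval hy <;> linarith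

lemma third_mem_kkEndpoints : (1/3 : ℝ) ∈ kkEndpoints :=
  ⟨third_mem_cantorSet one_mem_cantorSet, 1/3, third_mem_cantorSet one_mem_cantorSet,
    2/3, by simpa using third_add_mem_cantorSet zero_mem_cantorSet,
    by norm_num, cantorSet_inter_middle, Or.inl rfl⟩
lemma kkEndpoints_subset : kkEndpoints ⊆ cantorSet := fun _ h => h.1

lemma kkEndpoints_third {e : ℝ} (he : e ∈ kkEndpoints) : e / 3 ∈ kkEndpoints := by
  obtain ⟨heC, a, ha, b, hb, hab, hgap, hor⟩ := he
  refine ⟨third_mem_cantorSet heC, a/3, third_mem_cantorSet ha, b/3, third_mem_cantorSet hb,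
    by linarith, ?_, by rcases hor with rfl | rfl <;> simp⟩
  ext c
  simp only [mem_inter_iff, mem_Ioo, mem_empty_iff_false, iff_false, not_and, and_imp]
  intro h1 h2 hc
  obtain ⟨hb0, hb1⟩ := cantorSet_subset_unitInterval hb
  rcases cantorSet_cases hc with ⟨y, hy, rfl⟩ | ⟨y, hy, rfl⟩
  · have : y ∈ Ioo a b ∩ cantorSet := ⟨⟨by linarith, by linarith⟩, hy⟩
    rw [hgap] at this; exact this
  · obtain ⟨hy0, hy1⟩ := cantorSet_subset_unitInterval hy
    linarith

lemma kkEndpoints_third_add {e : ℝ} (he : e ∈ kkEndpoints) : (2 + e) / 3 ∈ kkEndpoints := by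
  obtain ⟨heC, a, ha, b, hb, hab, hgap, hor⟩ := he
  refine ⟨third_add_mem_cantorSet heC, (2+a)/3, third_add_mem_cantorSet ha, (2+b)/3,
    third_add_mem_cantorSet hb, by linarith, ?_, by rcases hor with rfl | rfl <;> simp⟩
  ext c
  simp only [mem_inter_iff, mem_Ioo, mem_empty_iff_false, iff_false, not_and, and_imp]
  intro h1 h2 hc
  obtain ⟨ha0, ha1⟩ := cantorSet_subset_unitInterval ha
  rcases cantorSet_cases hc with ⟨y, hy, rfl⟩ | ⟨y, hy, rfl⟩
  · obtain ⟨hy0, hy1⟩ := cantorSet_subset_unitInterval hy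
    linarith
  · have : y ∈ Ioo a b ∩ cantorSet := ⟨⟨by linarith, by linarith⟩, hy⟩
    rw [hgap] at this; exact this

lemma kkEndpoints_approx (n : ℕ) : ∀ x ∈ cantorSet, ∃ e ∈ kkEndpoints,
    |x - e| ≤ (2/3) * (1/3)^n := by
  induction n with
  | zero =>
    intro x hx
    obtain ⟨h0, h1⟩ := cantorSet_subset_unitInterval hx
    refine ⟨1/3, third_mem_kkEndpoints, ?_⟩
    rw [abs_le]; norm_num; constructor <;> linarith
  | succ n ih =>
    intro x hx
    rcases cantorSet_cases hx with ⟨y, hy, rfl⟩ | ⟨y, hy, rfl⟩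
    · obtain ⟨e, he, hd⟩ := ih y hy
      refine ⟨e/3, kkEndpoints_third he, ?_⟩
      have : y / 3 - e / 3 = (y - e)/3 := by ring
      rw [this, abs_div]
      rw [show |(3:ℝ)| = 3 by norm_num]
      rw [show ((2:ℝ)/3) * (1/3)^(n+1) = ((2/3) * (1/3)^n)/3 by ring]
      linarith
    · obtain ⟨e, he, hd⟩ := ih y hy
      refine ⟨(2+e)/3, kkEndpoints_third_add he, ?_⟩
      have : (2+y) / 3 - (2+e) / 3 = (y - e)/3 := by ring
      rw [this, abs_div, show |(3:ℝ)| = 3 by norm_num,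
        show ((2:ℝ)/3) * (1/3)^(n+1) = ((2/3) * (1/3)^n)/3 by ring]
      linarith

lemma cantorSet_perfect_aux (n : ℕ) : ∀ x ∈ cantorSet, ∃ y ∈ cantorSet,
    y ≠ x ∧ |x - y| ≤ (1/3)^n := by
  induction n with
  | zero =>
    intro x hx
    obtain ⟨h0, h1⟩ := cantorSet_subset_unitInterval hx
    by_cases h : x ≤ 1/2
    · exact ⟨1, one_mem_cantorSet, by intro h'; rw [← h'] at h; norm_num at h,
        by rw [abs_le]; norm_num; constructor <;> linarith⟩
    · exact ⟨0, zero_mem_cantorSet, by intro h'; rw [← h'] at h; norm_num at h,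
        by rw [abs_le]; norm_num; constructor <;> linarith⟩
  | succ n ih =>
    intro x hx
    rcases cantorSet_cases hx with ⟨w, hw, rfl⟩ | ⟨w, hw, rfl⟩
    · obtain ⟨y, hy, hne, hd⟩ := ih w hw
      refine ⟨y/3, third_mem_cantorSet hy, fun h => hne (by field_simp at h; linarith), ?_⟩
      have : w / 3 - y / 3 = (w - y)/3 := by ring
      rw [this, abs_div, show |(3:ℝ)| = 3 by norm_num,
        show ((1:ℝ)/3)^(n+1) = ((1/3)^n)/3 by ring]
      linarith
    · obtain ⟨y, hy, hne, hd⟩ := ih w hw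
      refine ⟨(2+y)/3, third_add_mem_cantorSet hy,
        fun h => hne (by field_simp at h; linarith), ?_⟩
      have : (2+w) / 3 - (2+y) / 3 = (w - y)/3 := by ring
      rw [this, abs_div, show |(3:ℝ)| = 3 by norm_num,
        show ((1:ℝ)/3)^(n+1) = ((1/3)^n)/3 by ring]
      linarith

/-- Endpoints are dense in the Cantor set. -/
lemma kkEndpoints_dense {x : ℝ} (hx : x ∈ cantorSet) {δ : ℝ} (hδ : 0 < δ) :
    ∃ e ∈ kkEndpoints, |x - e| < δ := by
  obtain ⟨n, hn⟩ := exists_pow_lt_of_lt_one hδ (by norm_num : (1:ℝ)/3 < 1)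
  obtain ⟨e, he, hd⟩ := kkEndpoints_approx n x hx
  refine ⟨e, he, lt_of_le_of_lt hd ?_⟩
  calc (2/3) * (1/3)^n ≤ 1 * (1/3)^n := by
        apply mul_le_mul_of_nonneg_right (by norm_num) (by positivity)
    _ < δ := by rw [one_mul]; exact hn

/-- The Cantor set has no isolated points. -/
lemma cantorSet_perfect {x : ℝ} (hx : x ∈ cantorSet) {δ : ℝ} (hδ : 0 < δ) :
    ∃ y ∈ cantorSet, y ≠ x ∧ |x - y| < δ := by
  obtain ⟨n, hn⟩ := exists_pow_lt_of_lt_one hδ (by norm_num : (1:ℝ)/3 < 1)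
  obtain ⟨y, hy, hne, hd⟩ := cantorSet_perfect_aux n x hx
  exact ⟨y, hy, hne, lt_of_le_of_lt hd hn⟩

/-- Endpoints distinct from a given point are dense in the Cantor set. -/
lemma kkEndpoints_dense' {x : ℝ} (hx : x ∈ cantorSet) {δ : ℝ} (hδ : 0 < δ) (x0 : ℝ) :
    ∃ e ∈ kkEndpoints, e ≠ x0 ∧ |x - e| < δ := by
  by_cases h : x = x0
  · subst h
    obtain ⟨y, hy, hne, hd⟩ := cantorSet_perfect hx (half_pos hδ)
    have hyx : 0 < |y - x| := abs_pos.mpr (sub_ne_zero.mpr hne)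
    obtain ⟨e, he, hd2⟩ := kkEndpoints_dense hy (half_pos hyx)
    have hxy : |x - y| = |y - x| := abs_sub_comm _ _
    have htri : |y - x| ≤ |y - e| + |e - x| := abs_sub_le _ _ _
    have hye : |y - e| < |y - x| / 2 := hd2
    refine ⟨e, he, ?_, ?_⟩
    · intro h'; subst h'
      have : |y - e| = |y - e| := rfl
      -- e = x : then |y - x| ≤ |y - x|/2 + 0
      simp only [sub_self, abs_zero] at htri
      linarith
    · have : |x - e| ≤ |x - y| + |y - e| := abs_sub_le _ _ _
      rw [hxy] at hd
      linarith
  · obtain ⟨e, he, hd⟩ := kkEndpoints_dense hx (lt_min hδ (abs_pos.mpr (sub_ne_zero.mpr h)))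
    refine ⟨e, he, ?_, lt_of_lt_of_le hd (min_le_left _ _)⟩
    intro h'; subst h'
    exact absurd (lt_of_lt_of_le hd (min_le_right _ _)) (lt_irrefl _)
/-- The set of "gaps" of the Cantor set. -/
def kkGaps : Set (ℝ × ℝ) :=
  {p | p.1 ∈ cantorSet ∧ p.2 ∈ cantorSet ∧ p.1 < p.2 ∧ Ioo p.1 p.2 ∩ cantorSet = ∅}

lemma kkEndpoints_countable : kkEndpoints.Countable := by
  have h : ∀ p : kkGaps, ∃ q : ℚ, p.1.1 < (q:ℝ) ∧ (q:ℝ) < p.1.2 :=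
    fun p => exists_rat_btwn p.2.2.2.1
  choose f hf1 hf2 using h
  have hinj : Function.Injective f := by
    rintro ⟨⟨a, b⟩, ha, hb, hab, hgap⟩ ⟨⟨a', b'⟩, ha', hb', hab', hgap'⟩ hq
    have h1 := hf1 ⟨⟨a, b⟩, ha, hb, hab, hgap⟩
    have h2 := hf2 ⟨⟨a, b⟩, ha, hb, hab, hgap⟩
    have h1' := hf1 ⟨⟨a', b'⟩, ha', hb', hab', hgap'⟩
    have h2' := hf2 ⟨⟨a', b'⟩, ha', hb', hab', hgap'⟩
    rw [hq] at h1 h2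
    have haa : a = a' := by
      by_contra hne
      rcases lt_or_gt_of_ne hne with h | h
      · have : a' ∈ Ioo a b ∩ cantorSet := ⟨⟨h, lt_trans h1' h2⟩, ha'⟩
        rw [hgap] at this; exact this
      · have : a ∈ Ioo a' b' ∩ cantorSet := ⟨⟨h, lt_trans h1 h2'⟩, ha⟩
        rw [hgap'] at this; exact this
    have hbb : b = b' := by
      by_contra hne
      rcases lt_or_gt_of_ne hne with h | h
      · have : b ∈ Ioo a' b' ∩ cantorSet := ⟨⟨lt_trans h1' h2, h⟩, hb⟩
        rw [hgap'] at this; exact this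
      · have : b' ∈ Ioo a b ∩ cantorSet := ⟨⟨lt_trans h1 h2', h⟩, hb'⟩
        rw [hgap] at this; exact this
    exact Subtype.ext (Prod.ext haa hbb)
  have hGc : kkGaps.Countable := by
    rw [← Set.countable_coe_iff]
    exact Function.Injective.countable hinj
  have hsub : kkEndpoints ⊆ (Prod.fst '' kkGaps) ∪ (Prod.snd '' kkGaps) := by
    rintro x ⟨hx, a, ha, b, hb, hab, hgap, hor⟩
    rcases hor with rfl | rfl
    · exact Or.inl ⟨(x, b), ⟨hx, hb, hab, hgap⟩, rfl⟩
    · exact Or.inr ⟨(a, x), ⟨ha, hx, hab, hgap⟩, rfl⟩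
  exact ((hGc.image _).union (hGc.image _)).mono hsub

/-- Parametrization of the segment from `(x,0)` to the apex. -/
noncomputable def kkL (x t : ℝ) : ℝ × ℝ := ((1-t)*x + t/2, t/2)

lemma kkL_eq_comb (x t : ℝ) : (1-t) • ((x, (0:ℝ)) : ℝ × ℝ) + t • kkApex = kkL x t := by
  simp only [kkApex, kkL, Prod.smul_mk, smul_eq_mul, Prod.mk_add_mk, Prod.ext_iff]
  constructor <;> ring

lemma kkL_one (x : ℝ) : kkL x 1 = kkApex := by
  simp only [kkL, kkApex, Prod.ext_iff]
  norm_num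

lemma kkL_mem_segment {x t : ℝ} (ht : t ∈ Icc (0:ℝ) 1) :
    kkL x t ∈ segment ℝ (x, (0:ℝ)) kkApex := by
  rw [segment_eq_image]
  exact ⟨t, ht, kkL_eq_comb x t⟩

lemma kkL_snd (x t : ℝ) : (kkL x t).2 = t/2 := rfl

lemma mem_kkFan_intro {x t : ℝ} (hx : x ∈ cantorSet) (ht : t ∈ Icc (0:ℝ) 1)
    (h : (x ∈ kkEndpoints ∧ ∃ q : ℚ, t = (q:ℝ)) ∨ (x ∉ kkEndpoints ∧ Irrational t)) :
    kkL x t ∈ kkFan := by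
  simp only [kkFan, mem_iUnion, mem_sep_iff, exists_prop]
  refine ⟨x, hx, kkL_mem_segment ht, ?_⟩
  rcases h with ⟨hE, q, rfl⟩ | ⟨hnE, hirr⟩
  · exact Or.inl ⟨hE, q/2, by rw [kkL_snd]; push_cast; ring⟩
  · refine Or.inr ⟨hnE, ?_⟩
    rw [kkL_snd, show (2:ℝ) = ((2:ℕ):ℝ) by norm_num]
    exact irrational_div_natCast_iff.mpr ⟨by norm_num, hirr⟩

lemma mem_kkFan_elim {p : ℝ × ℝ} (hp : p ∈ kkFan) :
    ∃ x, x ∈ cantorSet ∧ ∃ t, t ∈ Icc (0:ℝ) 1 ∧ p = kkL x t := by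
  simp only [kkFan, mem_iUnion, mem_sep_iff, exists_prop] at hp
  obtain ⟨x, hx, hseg, -⟩ := hp
  rw [segment_eq_image] at hseg
  obtain ⟨t, ht, hpt⟩ := hseg
  exact ⟨x, hx, t, ht, by rw [← hpt]; exact (kkL_eq_comb x t).symm |>.symm⟩

lemma kkApex_mem_kkFan : kkApex ∈ kkFan := by
  rw [← kkL_one (1/3)]
  exact mem_kkFan_intro (third_mem_kkEndpoints.1) ⟨zero_le_one, le_refl 1⟩
    (Or.inl ⟨third_mem_kkEndpoints, 1, by norm_num⟩)

lemma kkFan_snd {p : ℝ × ℝ} (hp : p ∈ kkFan) : p.2 ∈ Icc (0:ℝ) (1/2) := by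
  obtain ⟨x, hx, t, ht, rfl⟩ := mem_kkFan_elim hp
  rw [kkL_snd]
  exact ⟨by linarith [ht.1], by linarith [ht.2]⟩
lemma continuous_kkL : Continuous (fun p : ℝ × ℝ => kkL p.1 p.2) := by
  unfold kkL; fun_prop

lemma continuous_kkL_left (c : ℝ) : Continuous (fun x : ℝ => kkL x c) := by
  unfold kkL; fun_prop

lemma continuous_kkL_right (x : ℝ) : Continuous (fun t : ℝ => kkL x t) := by
  unfold kkL; fun_prop

lemma abs_le_one_of_cantor {x : ℝ} (hx : x ∈ cantorSet) : |x| ≤ 1 := by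
  obtain ⟨h0, h1⟩ := cantorSet_subset_unitInterval hx
  rw [abs_le]; constructor <;> linarith

lemma dist_kkL_le {x x' t t' : ℝ} (hx : |x| ≤ 1)
    (ht : t ∈ Icc (0:ℝ) 1) (ht' : t' ∈ Icc (0:ℝ) 1) :
    dist (kkL x' t') (kkL x t) ≤ |x' - x| + 2 * |t' - t| := by
  rw [Prod.dist_eq]
  apply max_le
  · rw [Real.dist_eq]
    have e : (1-t')*x' + t'/2 - ((1-t)*x + t/2)
        = (1-t')*(x'-x) + ((t-t')*x + (t'-t)/2) := by ring
    show |(1-t')*x' + t'/2 - ((1-t)*x + t/2)| ≤ _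
    rw [e]
    have h1 : |(1-t')*(x'-x)| ≤ |x' - x| := by
      rw [abs_mul]
      have : |1 - t'| ≤ 1 := abs_le.mpr ⟨by linarith [ht'.2], by linarith [ht'.1]⟩
      nlinarith [abs_nonneg (x' - x)]
    have h2 : |(t-t')*x + (t'-t)/2| ≤ |t - t'| + |t' - t|/2 := by
      refine (abs_add_le _ _).trans ?_
      have : |(t-t')*x| ≤ |t - t'| := by
        rw [abs_mul]; nlinarith [abs_nonneg (t - t')]
      have h3 : |(t'-t)/2| = |t'-t|/2 := by rw [abs_div]; norm_num
      linarith
    have h4 : |t - t'| = |t' - t| := abs_sub_comm _ _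
    calc |(1-t')*(x'-x) + ((t-t')*x + (t'-t)/2)|
        ≤ |(1-t')*(x'-x)| + |(t-t')*x + (t'-t)/2| := abs_add_le _ _
      _ ≤ |x' - x| + 2 * |t' - t| := by rw [h4] at h2; linarith [abs_nonneg (t' - t)]
  · rw [Real.dist_eq]
    show |t'/2 - t/2| ≤ _
    have : t'/2 - t/2 = (t' - t)/2 := by ring
    rw [this, abs_div]
    have : |t' - t| / |2| = |t' - t|/2 := by norm_num
    rw [this]
    linarith [abs_nonneg (t' - t), abs_nonneg (x' - x)]

/-- Recovering the base point: if `kkL x t` is close to `kkL e t₀` with `t₀` away from `1`,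
then `x` is close to `e` and `t` is away from `1`. -/
lemma kkL_base_dist {x e t t₀ η δ : ℝ} (he : |e| ≤ 1)
    (ht : t ∈ Icc (0:ℝ) 1) (ht₀ : t₀ ≤ 1 - η) (hη : 0 < η)
    (hd : dist (kkL x t) (kkL e t₀) < δ) (hδ : 4*δ ≤ η) :
    |x - e| ≤ 8*δ/η ∧ t ≤ 1 - η/2 := by
  rw [Prod.dist_eq] at hd
  have h1 : |(1-t)*x + t/2 - ((1-t₀)*e + t₀/2)| < δ :=
    lt_of_le_of_lt (le_max_left _ _) hd
  have h2 : |t/2 - t₀/2| < δ :=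
    lt_of_le_of_lt (le_max_right _ _) hd
  have htt : |t - t₀| < 2*δ := by
    have : t/2 - t₀/2 = (t - t₀)/2 := by ring
    rw [this, abs_div, show |(2:ℝ)| = 2 by norm_num] at h2
    linarith
  have habs := abs_lt.mp htt
  have hδpos : 0 < δ := lt_of_le_of_lt (abs_nonneg _) h2
  have ht1 : t ≤ 1 - η/2 := by linarith
  refine ⟨?_, ht1⟩
  have e1 : (1-t)*x + t/2 - ((1-t₀)*e + t₀/2) = (1-t)*(x-e) + ((t₀-t)*e + (t-t₀)/2) := by ring
  rw [e1] at h1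
  have h3 : |(t₀-t)*e + (t-t₀)/2| ≤ 3*δ := by
    refine (abs_add_le _ _).trans ?_
    have ha : |(t₀-t)*e| ≤ |t - t₀| := by
      rw [abs_mul, abs_sub_comm t₀ t]; nlinarith [abs_nonneg (t - t₀)]
    have hb : |(t-t₀)/2| ≤ |t-t₀|/2 := by rw [abs_div]; norm_num
    linarith
  have h4 : |(1-t)*(x-e)| ≤ 4*δ := by
    have habs2 := abs_add_le ((1-t)*(x-e) + ((t₀-t)*e + (t-t₀)/2)) (-((t₀-t)*e + (t-t₀)/2))
    rw [add_neg_cancel_right, abs_neg] at habs2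
    linarith
  rw [abs_mul, abs_of_nonneg (by linarith [ht.2] : (0:ℝ) ≤ 1 - t)] at h4
  rw [le_div_iff₀ hη]
  nlinarith [abs_nonneg (x - e), mul_nonneg (by linarith : (0:ℝ) ≤ 1 - t - η/2) (abs_nonneg (x-e))]

lemma kk_exists_rat_near {t ε : ℝ} (ht : t ∈ Icc (0:ℝ) 1) (hε : 0 < ε) :
    ∃ t' , t' ∈ Icc (0:ℝ) 1 ∧ (∃ q : ℚ, t' = (q:ℝ)) ∧ |t' - t| < ε := by
  rcases lt_or_eq_of_le ht.2 with h1 | h1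
  · obtain ⟨q, hq1, hq2⟩ := exists_rat_btwn (lt_min h1 (lt_add_of_pos_right t hε))
    refine ⟨(q:ℝ), ⟨le_trans ht.1 (le_of_lt hq1), le_of_lt (lt_of_lt_of_le hq2 (min_le_left _ _))⟩,
      ⟨q, rfl⟩, ?_⟩
    rw [abs_lt]
    have := lt_of_lt_of_le hq2 (min_le_right _ _)
    constructor <;> linarith
  · obtain ⟨q, hq1, hq2⟩ := exists_rat_btwn (show max 0 (1-ε) < 1 by
      rw [max_lt_iff]; constructor <;> linarith)
    refine ⟨(q:ℝ), ⟨le_trans (le_max_left _ _) (le_of_lt hq1), le_of_lt hq2⟩, ⟨q, rfl⟩, ?_⟩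
    rw [abs_lt]
    have := lt_of_le_of_lt (le_max_right 0 (1-ε)) hq1
    constructor <;> linarith
  
lemma kk_exists_irr_near {t ε : ℝ} (ht : t ∈ Icc (0:ℝ) 1) (hε : 0 < ε) :
    ∃ t' , t' ∈ Icc (0:ℝ) 1 ∧ Irrational t' ∧ |t' - t| < ε := by
  rcases lt_or_eq_of_le ht.2 with h1 | h1
  · obtain ⟨r, hr, hq1, hq2⟩ := exists_irrational_btwn (lt_min h1 (lt_add_of_pos_right t hε))
    refine ⟨r, ⟨le_trans ht.1 (le_of_lt hq1), le_of_lt (lt_of_lt_of_le hq2 (min_le_left _ _))⟩,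
      hr, ?_⟩
    rw [abs_lt]
    have := lt_of_lt_of_le hq2 (min_le_right _ _)
    constructor <;> linarith
  · obtain ⟨r, hr, hq1, hq2⟩ := exists_irrational_btwn (show max 0 (1-ε) < 1 by
      rw [max_lt_iff]; constructor <;> linarith)
    refine ⟨r, ⟨le_trans (le_max_left _ _) (le_of_lt hq1), le_of_lt hq2⟩, hr, ?_⟩
    rw [abs_lt]
    have := lt_of_le_of_lt (le_max_right 0 (1-ε)) hq1
    constructor <;> linarith

/-- Points of the fan on the fibre over `x` approximate every point of the segment. -/
lemma fan_fiber_dense {x t ε : ℝ} (hx : x ∈ cantorSet) (ht : t ∈ Icc (0:ℝ) 1) (hε : 0 < ε) :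
    ∃ t', t' ∈ Icc (0:ℝ) 1 ∧ kkL x t' ∈ kkFan ∧ |t' - t| < ε := by
  by_cases hE : x ∈ kkEndpoints
  · obtain ⟨t', ht', hq, hd⟩ := kk_exists_rat_near ht hε
    exact ⟨t', ht', mem_kkFan_intro hx ht' (Or.inl ⟨hE, hq⟩), hd⟩
  · obtain ⟨t', ht', hq, hd⟩ := kk_exists_irr_near ht hε
    exact ⟨t', ht', mem_kkFan_intro hx ht' (Or.inr ⟨hE, hq⟩), hd⟩
lemma kk_main {A B : Set (ℝ × ℝ)} (hUnion : A ∪ B = kkFan) (hDisj : A ∩ B = ∅)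
    (hA : kkFan ∩ closure A ⊆ A) (hB : kkFan ∩ closure B ⊆ B) (hzA : kkApex ∈ A) :
    B = ∅ := by
  by_contra hBne
  obtain ⟨p0, hp0B⟩ := Set.nonempty_iff_ne_empty.mpr hBne
  set Ka := closure A with hKa
  set Kb := closure B with hKb
  have hKac : IsClosed Ka := isClosed_closure
  have hKbc : IsClosed Kb := isClosed_closure
  have hAX : A ⊆ kkFan := hUnion ▸ subset_union_left
  have hBX : B ⊆ kkFan := hUnion ▸ subset_union_right
  have hXsub : kkFan ⊆ Ka ∪ Kb := by
    rw [← hUnion]; exact union_subset_union subset_closure subset_closure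
  have hXD : ∀ p ∈ kkFan, p ∉ Ka ∩ Kb := by
    intro p hp hpD
    have : p ∈ A ∩ B := ⟨hA ⟨hp, hpD.1⟩, hB ⟨hp, hpD.2⟩⟩
    rw [hDisj] at this; exact this
  have hzKb : kkApex ∉ Kb := by
    intro h
    have : kkApex ∈ A ∩ B := ⟨hzA, hB ⟨hAX hzA, h⟩⟩
    rw [hDisj] at this; exact this
  -- the full segments lie in Ka ∪ Kb
  have hseg : ∀ x ∈ cantorSet, ∀ t ∈ Icc (0:ℝ) 1, kkL x t ∈ Ka ∪ Kb := by
    intro x hx t ht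
    have hcl : kkL x t ∈ closure kkFan := by
      rw [Metric.mem_closure_iff]
      intro ε hε
      obtain ⟨t', ht', hmem, hd⟩ := fan_fiber_dense hx ht (show 0 < ε/4 by linarith)
      refine ⟨kkL x t', hmem, ?_⟩
      rw [dist_comm]
      have : |x - x| = 0 := by rw [sub_self, abs_zero]
      calc dist (kkL x t') (kkL x t) ≤ |x - x| + 2 * |t' - t| :=
            dist_kkL_le (abs_le_one_of_cantor hx) ht ht'
        _ < ε := by rw [this]; linarith
    exact closure_minimal hXsub (hKac.union hKbc) hcl
  -- the closed set of base points whose segment meets Kb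
  set N : Set ℝ := {x | x ∈ cantorSet ∧ ∃ t, t ∈ Icc (0:ℝ) 1 ∧ kkL x t ∈ Kb} with hN
  have hNclosed : IsClosed N := by
    have himg : N = Prod.fst ''
        {p : ℝ × ℝ | p.1 ∈ cantorSet ∧ p.2 ∈ Icc (0:ℝ) 1 ∧ kkL p.1 p.2 ∈ Kb} := by
      ext x
      constructor
      · rintro ⟨hx, t, ht, hkb⟩; exact ⟨(x, t), ⟨hx, ht, hkb⟩, rfl⟩
      · rintro ⟨⟨a, b⟩, ⟨ha, hb', hkb⟩, rfl⟩; exact ⟨ha, b, hb', hkb⟩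
    have hKcleq : {p : ℝ × ℝ | p.1 ∈ cantorSet ∧ p.2 ∈ Icc (0:ℝ) 1 ∧ kkL p.1 p.2 ∈ Kb}
        = (Prod.fst ⁻¹' cantorSet) ∩ ((Prod.snd ⁻¹' Icc (0:ℝ) 1) ∩
          ((fun p : ℝ × ℝ => kkL p.1 p.2) ⁻¹' Kb)) := by
      ext p; simp only [mem_setOf_eq, mem_inter_iff, mem_preimage]
    have hKcl : IsClosed {p : ℝ × ℝ | p.1 ∈ cantorSet ∧ p.2 ∈ Icc (0:ℝ) 1 ∧ kkL p.1 p.2 ∈ Kb} := by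
      rw [hKcleq]
      exact (isClosed_cantorSet.preimage continuous_fst).inter
        ((isClosed_Icc.preimage continuous_snd).inter (hKbc.preimage continuous_kkL))
    have hKcpt : IsCompact {p : ℝ × ℝ | p.1 ∈ cantorSet ∧ p.2 ∈ Icc (0:ℝ) 1 ∧ kkL p.1 p.2 ∈ Kb} := by
      refine (isCompact_cantorSet.prod (isCompact_Icc (a := (0:ℝ)) (b := 1))).of_isClosed_subset hKcl ?_
      rintro ⟨a, b⟩ ⟨ha, hb', -⟩
      exact ⟨ha, hb'⟩
    rw [himg]
    exact (hKcpt.image continuous_fst).isClosed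
  -- every fibre over N meets Ka ∩ Kb
  have hND : ∀ x ∈ N, ∃ t, t ∈ Icc (0:ℝ) 1 ∧ kkL x t ∈ Ka ∩ Kb := by
    rintro x ⟨hxC, t0, ht0, ht0Kb⟩
    have hconn : IsPreconnected (kkL x '' Icc 0 1) :=
      isPreconnected_Icc.image _ (continuous_kkL_right x).continuousOn
    have hres := isPreconnected_closed_iff.mp hconn Ka Kb hKac hKbc
      (by rintro p ⟨t, ht, rfl⟩; exact hseg x hxC t ht)
      ⟨kkApex, ⟨1, ⟨by norm_num, le_refl 1⟩, kkL_one x⟩, subset_closure hzA⟩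
      ⟨kkL x t0, ⟨t0, ht0, rfl⟩, ht0Kb⟩
    obtain ⟨p, ⟨t, ht, hpt⟩, hpD⟩ := hres
    exact ⟨t, ht, hpt ▸ hpD⟩
  -- key density: near any point of N there are endpoints in N
  have hKey : ∀ x2 ∈ N, ∀ ε : ℝ, 0 < ε →
      ∃ x', x' ∈ kkEndpoints ∧ x' ∈ N ∧ x' ≠ x2 ∧ |x' - x2| < ε := by
    rintro x2 ⟨hx2C, t0, ht0, ht0Kb⟩ ε hε
    have ht0ne : t0 ≠ 1 := by rintro rfl; rw [kkL_one] at ht0Kb; exact hzKb ht0Kb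
    have ht0lt : t0 < 1 := lt_of_le_of_ne ht0.2 ht0ne
    set η := 1 - t0 with hη
    have hηpos : 0 < η := by simp only [hη]; linarith
    set δ1 := min (η/4) (ε*η/32) with hδ1
    have hδ1pos : 0 < δ1 := lt_min (by linarith) (by positivity)
    have hmcl : kkL x2 t0 ∈ closure B := ht0Kb
    rw [Metric.mem_closure_iff] at hmcl
    obtain ⟨p, hpB, hdp⟩ := hmcl δ1 hδ1pos
    obtain ⟨x, hxC, t, ht, rfl⟩ := mem_kkFan_elim (hBX hpB)
    have hbd := kkL_base_dist (abs_le_one_of_cantor hx2C) ht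
      (show t0 ≤ 1 - η by simp only [hη]; linarith) hηpos
      (by rw [dist_comm] at hdp; exact hdp)
      (by have := min_le_left (η/4) (ε*η/32); linarith)
    have hxd : |x - x2| ≤ ε/4 := by
      refine hbd.1.trans ?_
      rw [div_le_iff₀ hηpos]
      have := min_le_right (η/4) (ε*η/32)
      nlinarith
    have htlt : t < 1 := by linarith [hbd.2]
    -- the B-point is not in Ka; get a ball avoiding Ka
    have hpKa : kkL x t ∉ Ka := by
      intro h
      have : kkL x t ∈ A ∩ B := ⟨hA ⟨hBX hpB, h⟩, hpB⟩
      rw [hDisj] at this; exact this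
    obtain ⟨δ2, hδ2pos, hball⟩ := Metric.isOpen_iff.mp hKac.isOpen_compl _ hpKa
    -- choose an endpoint near x, different from x2, and a rational parameter near t
    obtain ⟨x', hx'E, hx'ne, hx'd⟩ := kkEndpoints_dense' hxC
      (show 0 < min (ε/4) (δ2/4) by positivity) x2
    obtain ⟨t', ht', hq', htd⟩ := kk_exists_rat_near ht (show 0 < δ2/8 by positivity)
    have hp'X : kkL x' t' ∈ kkFan :=
      mem_kkFan_intro (kkEndpoints_subset hx'E) ht' (Or.inl ⟨hx'E, hq'⟩)
    have hd2 : dist (kkL x' t') (kkL x t) < δ2 := by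
      refine lt_of_le_of_lt (dist_kkL_le (abs_le_one_of_cantor hxC) ht ht') ?_
      have h1 : |x' - x| < δ2/4 := by
        rw [abs_sub_comm]; exact lt_of_lt_of_le hx'd (min_le_right _ _)
      linarith
    have hp'Kb : kkL x' t' ∈ Kb := by
      have hnotKa : kkL x' t' ∈ Kaᶜ := hball (Metric.mem_ball.mpr hd2)
      rcases hXsub hp'X with h | h
      · exact absurd h hnotKa
      · exact h
    refine ⟨x', hx'E, ⟨kkEndpoints_subset hx'E, t', ht', hp'Kb⟩, hx'ne, ?_⟩
    have h1 : |x' - x| < ε/4 := by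
      rw [abs_sub_comm]; exact lt_of_lt_of_le hx'd (min_le_left _ _)
    calc |x' - x2| ≤ |x' - x| + |x - x2| := abs_sub_le _ _ _
      _ < ε := by linarith
  -- the closed sets indexed by rationals
  set Q : ℚ → Set ℝ := fun q => {x | x ∈ cantorSet ∧ kkL x (q:ℝ) ∈ Ka ∩ Kb} with hQ
  have hQclosed : ∀ q : ℚ, IsClosed (Q q) := by
    intro q
    have : Q q = cantorSet ∩ ((fun x : ℝ => kkL x (q:ℝ)) ⁻¹' (Ka ∩ Kb)) := by
      ext x; simp only [hQ, mem_setOf_eq, mem_inter_iff, mem_preimage]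
    rw [this]
    exact isClosed_cantorSet.inter ((hKac.inter hKbc).preimage (continuous_kkL_left _))
  -- Baire category on N
  have hNne : N.Nonempty := by
    obtain ⟨x, hxC, t, ht, rfl⟩ := mem_kkFan_elim (hBX hp0B)
    exact ⟨x, hxC, t, ht, subset_closure hp0B⟩
  haveI : Nonempty ↥N := hNne.to_subtype
  haveI : CompleteSpace ↥N := hNclosed.completeSpace_coe
  haveI : Countable ↥kkEndpoints := kkEndpoints_countable.to_subtype
  set F : ℚ ⊕ ↥kkEndpoints → Set ↥N := Sum.elim
    (fun q => Subtype.val ⁻¹' Q q) (fun e => Subtype.val ⁻¹' {(e:ℝ)}) with hF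
  have hFclosed : ∀ i, IsClosed (F i) := by
    rintro (q | e)
    · exact (hQclosed q).preimage continuous_subtype_val
    · exact isClosed_singleton.preimage continuous_subtype_val
  have hFcover : ⋃ i, F i = univ := by
    rw [eq_univ_iff_forall]
    rintro ⟨x, hxN⟩
    by_cases hE : x ∈ kkEndpoints
    · exact mem_iUnion.mpr ⟨Sum.inr ⟨x, hE⟩, rfl⟩
    · obtain ⟨t, ht, htD⟩ := hND x hxN
      have hnirr : ¬ Irrational t :=
        fun hirr => hXD _ (mem_kkFan_intro hxN.1 ht (Or.inr ⟨hE, hirr⟩)) htD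
      rw [Irrational] at hnirr
      obtain ⟨q, hq⟩ := not_not.mp hnirr
      refine mem_iUnion.mpr ⟨Sum.inl q, ⟨hxN.1, ?_⟩⟩
      rw [hq]; exact htD
  obtain ⟨i, hi⟩ := nonempty_interior_of_iUnion_of_closed hFclosed hFcover
  obtain ⟨y0, hy0⟩ := hi
  rcases i with q | e
  · -- a rational level set has interior: contradiction via an endpoint
    obtain ⟨ε, hεpos, hball⟩ := Metric.isOpen_iff.mp isOpen_interior y0 hy0
    obtain ⟨x', hx'E, hx'N, hx'ne, hx'd⟩ := hKey (y0 : ℝ) y0.2 ε hεpos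
    have hmem : (⟨x', hx'N⟩ : ↥N) ∈ Metric.ball y0 ε := by
      rw [Metric.mem_ball, Subtype.dist_eq, Real.dist_eq]; exact hx'd
    have hFQ : (⟨x', hx'N⟩ : ↥N) ∈ F (Sum.inl q) := interior_subset (hball hmem)
    have hx'Q : x' ∈ Q q := hFQ
    have hqD : kkL x' (q:ℝ) ∈ Ka ∩ Kb := hx'Q.2
    -- q lies in [0,1]
    have hsnd : kkL x' (q:ℝ) ∈ {p : ℝ × ℝ | p.2 ∈ Icc (0:ℝ) (1/2)} := by
      have hsub2 : closure B ⊆ {p : ℝ × ℝ | p.2 ∈ Icc (0:ℝ) (1/2)} :=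
        closure_minimal (fun p hp => kkFan_snd (hBX hp))
          (isClosed_Icc.preimage continuous_snd)
      exact hsub2 hqD.2
    have hq01 : (q:ℝ) ∈ Icc (0:ℝ) 1 := by
      have h2 := hsnd
      rw [mem_setOf_eq, kkL_snd] at h2
      exact ⟨by linarith [h2.1], by linarith [h2.2]⟩
    exact hXD _ (mem_kkFan_intro (kkEndpoints_subset hx'E) hq01 (Or.inl ⟨hx'E, q, rfl⟩)) hqD
  · -- a singleton has interior: contradiction via density of endpoints in N
    obtain ⟨ε, hεpos, hball⟩ := Metric.isOpen_iff.mp isOpen_interior y0 hy0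
    have hy0F : y0 ∈ F (Sum.inr e) := interior_subset hy0
    have hy0e : (y0 : ℝ) = (e : ℝ) := hy0F
    obtain ⟨x', hx'E, hx'N, hx'ne, hx'd⟩ := hKey (y0 : ℝ) y0.2 ε hεpos
    have hmem : (⟨x', hx'N⟩ : ↥N) ∈ Metric.ball y0 ε := by
      rw [Metric.mem_ball, Subtype.dist_eq, Real.dist_eq]; exact hx'd
    have hx'F : (⟨x', hx'N⟩ : ↥N) ∈ F (Sum.inr e) := interior_subset (hball hmem)
    have : x' = (e : ℝ) := hx'F
    exact hx'ne (this.trans hy0e.symm)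

/-- The Knaster–Kuratowski fan is connected. -/
theorem stmt_6 : IsConnected kkFan := by
  refine ⟨⟨kkApex, kkApex_mem_kkFan⟩, ?_⟩
  rw [isPreconnected_closed_iff]
  intro F G hF hG hcov hFne hGne
  by_contra hne
  have hempty : kkFan ∩ (F ∩ G) = ∅ := not_nonempty_iff_eq_empty.mp hne
  have hUnion : (kkFan ∩ F) ∪ (kkFan ∩ G) = kkFan := by
    rw [← inter_union_distrib_left]
    exact inter_eq_left.mpr hcov
  have hDisj : (kkFan ∩ F) ∩ (kkFan ∩ G) = ∅ := by
    rw [← hempty]; ext p; simp only [mem_inter_iff, mem_empty_iff_false]; tauto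
  have hclA : kkFan ∩ closure (kkFan ∩ F) ⊆ kkFan ∩ F := fun p hp =>
    ⟨hp.1, (closure_minimal inter_subset_right hF) hp.2⟩
  have hclB : kkFan ∩ closure (kkFan ∩ G) ⊆ kkFan ∩ G := fun p hp =>
    ⟨hp.1, (closure_minimal inter_subset_right hG) hp.2⟩
  rcases hUnion ▸ kkApex_mem_kkFan with hz | hz
  · have := kk_main hUnion hDisj hclA hclB hz
    rw [this] at hGne
    exact Set.not_nonempty_empty hGne
  · have := kk_main (by rw [union_comm]; exact hUnion)
      (by rw [inter_comm]; exact hDisj) hclB hclA hz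
    rw [this] at hFne
    exact Set.not_nonempty_empty hFne
end

section
/- Every nontrivial continuum contained in the Knaster–Kuratowski fan is trivial; that is, every compact connected subset of the fan X having at least two points does not exist (every subcontinuum of X is a singleton or empty). -/
open Set

/- ### Auxiliary lemmas -/

lemma kkAux_preCantorSet_subset_Icc : ∀ n, preCantorSet n ⊆ Icc (0:ℝ) 1 := by
  intro n
  induction n with
  | zero => simp
  | succ n ih =>
    rintro x (⟨y, hy, rfl⟩ | ⟨y, hy, rfl⟩) <;> obtain ⟨h0, h1⟩ := ih hy <;>
      constructor <;> simp only <;> linarith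

lemma kkAux_not_Icc_subset_preCantorSet :
    ∀ n, ∀ a b : ℝ, (1/3:ℝ)^n < b - a → ¬ (Icc a b ⊆ preCantorSet n) := by
  intro n
  induction n with
  | zero =>
    intro a b h hs
    simp only [pow_zero] at h
    have hab : a ≤ b := by linarith
    obtain ⟨h0, _⟩ := (kkAux_preCantorSet_subset_Icc 0) (hs ⟨le_refl a, hab⟩)
    obtain ⟨_, h1⟩ := (kkAux_preCantorSet_subset_Icc 0) (hs ⟨hab, le_refl b⟩)
    linarith
  | succ n ih =>
    intro a b h hs
    have hpow : (0:ℝ) < (1/3:ℝ)^(n+1) := by positivity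
    have hab : a < b := by linarith
    have hpieces : ∀ x ∈ Icc a b,
        (x ∈ (· / 3) '' preCantorSet n ∧ x ≤ 1/3) ∨
        (x ∈ (fun y ↦ (2 + y) / 3) '' preCantorSet n ∧ 2/3 ≤ x) := by
      intro x hx
      rcases hs hx with (⟨y, hy, rfl⟩ | ⟨y, hy, rfl⟩)
      · left
        refine ⟨⟨y, hy, rfl⟩, ?_⟩
        obtain ⟨_, h1⟩ := kkAux_preCantorSet_subset_Icc n hy
        simp only; linarith
      · right
        refine ⟨⟨y, hy, rfl⟩, ?_⟩
        obtain ⟨h0, _⟩ := kkAux_preCantorSet_subset_Icc n hy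
        simp only; linarith
    have hhalf : ¬ ((1:ℝ)/2 ∈ Icc a b) := by
      intro hmem
      rcases hpieces _ hmem with (⟨_, h⟩ | ⟨_, h⟩) <;> linarith
    rw [mem_Icc, not_and_or, not_le, not_le] at hhalf
    rcases hhalf with hha | hhb
    · have hsub : Icc (3*a - 2) (3*b - 2) ⊆ preCantorSet n := by
        intro z hz
        have hz' : (2 + z)/3 ∈ Icc a b := by
          constructor <;> [skip; skip] <;> obtain ⟨h1, h2⟩ := hz <;> linarith
        rcases hpieces _ hz' with (⟨_, hle⟩ | ⟨⟨y, hy, hyz⟩, _⟩)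
        · obtain ⟨h1, _⟩ := hz'
          linarith
        · have : y = z := by field_simp at hyz; linarith
          rwa [← this]
      exact ih (3*a - 2) (3*b - 2) (by rw [pow_succ] at h; linarith) hsub
    · have hsub : Icc (3*a) (3*b) ⊆ preCantorSet n := by
        intro z hz
        have hz' : z/3 ∈ Icc a b := by
          constructor <;> obtain ⟨h1, h2⟩ := hz <;> linarith
        rcases hpieces _ hz' with (⟨⟨y, hy, hyz⟩, _⟩ | ⟨_, hge⟩)
        · have : y = z := by field_simp at hyz; linarith
          rwa [← this]
        · obtain ⟨_, h2⟩ := hz'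
          linarith
      exact ih (3*a) (3*b) (by rw [pow_succ] at h; linarith) hsub

lemma kkAux_cantorSet_td {C : Set ℝ} (hC : C ⊆ cantorSet) (hpc : IsPreconnected C) :
    C.Subsingleton := by
  intro a ha b hb
  by_contra hne
  wlog hab : a < b generalizing a b
  · exact this hb ha (Ne.symm hne) (lt_of_le_of_ne (not_lt.mp hab) (Ne.symm hne))
  have hIcc : Icc a b ⊆ C := hpc.ordConnected.out ha hb
  obtain ⟨n, hn⟩ := exists_pow_lt_of_lt_one (x := b - a) (by linarith) (by norm_num : (1/3:ℝ) < 1)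
  exact kkAux_not_Icc_subset_preCantorSet n a b hn
    (fun x hx => iInter_subset preCantorSet n (hC (hIcc hx)))

lemma kkAux_ratset_td {C : Set ℝ} (hC : ∀ x ∈ C, ∃ q : ℚ, x = (q : ℝ))
    (hpc : IsPreconnected C) : C.Subsingleton := by
  intro a ha b hb
  by_contra hne
  wlog hab : a < b generalizing a b
  · exact this hb ha (Ne.symm hne) (lt_of_le_of_ne (not_lt.mp hab) (Ne.symm hne))
  obtain ⟨r, hr, har, hrb⟩ := exists_irrational_btwn hab
  have hrC : r ∈ C := hpc.ordConnected.out ha hb ⟨le_of_lt har, le_of_lt hrb⟩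
  obtain ⟨q, hq⟩ := hC r hrC
  exact hr ⟨q, hq.symm⟩

lemma kkAux_irratset_td {C : Set ℝ} (hC : ∀ x ∈ C, Irrational x)
    (hpc : IsPreconnected C) : C.Subsingleton := by
  intro a ha b hb
  by_contra hne
  wlog hab : a < b generalizing a b
  · exact this hb ha (Ne.symm hne) (lt_of_le_of_ne (not_lt.mp hab) (Ne.symm hne))
  obtain ⟨q, haq, hqb⟩ := exists_rat_btwn hab
  have hqC : (q : ℝ) ∈ C := hpc.ordConnected.out ha hb ⟨le_of_lt haq, le_of_lt hqb⟩
  exact (hC _ hqC) ⟨q, rfl⟩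

lemma kkAux_fan_elim {p : ℝ × ℝ} (hp : p ∈ kkFan) :
    ∃ x ∈ cantorSet, 0 ≤ p.2 ∧ p.2 ≤ 1/2 ∧ p.1 = (1 - 2*p.2)*x + p.2 ∧
      ((x ∈ kkEndpoints ∧ ∃ q : ℚ, p.2 = (q : ℝ)) ∨ (x ∉ kkEndpoints ∧ Irrational p.2)) := by
  simp only [kkFan, mem_iUnion, mem_sep_iff] at hp
  obtain ⟨x, hx, hseg, hcond⟩ := hp
  obtain ⟨u, v, hu, hv, huv, heq⟩ := hseg
  have h1 : u * x + v * (1/2) = p.1 := congrArg Prod.fst heq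
  have h2 : u * 0 + v * (1/2) = p.2 := congrArg Prod.snd heq
  have hv2 : v = 2 * p.2 := by linarith
  have hu2 : u = 1 - 2 * p.2 := by linarith
  refine ⟨x, hx, by linarith, by linarith, ?_, hcond⟩
  rw [← h1, hu2, hv2]; ring

lemma kkAux_apex_char {p : ℝ × ℝ} (hp : p ∈ kkFan) (h2 : p.2 = 1/2) : p = kkApex := by
  obtain ⟨x, _, _, _, h1, _⟩ := kkAux_fan_elim hp
  have : p.1 = 1/2 := by rw [h1, h2]; ring
  exact Prod.ext this h2

/-- Case 1: connected subsets of the fan avoiding the apex are subsingletons. -/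
lemma kkAux_case1 {C : Set (ℝ × ℝ)} (hC : C ⊆ kkFan) (hap : kkApex ∉ C)
    (hpc : IsPreconnected C) : C.Subsingleton := by
  have hlt : ∀ r ∈ C, r.2 < 1/2 := by
    intro r hr
    obtain ⟨x, hx, h0, hle, h1, hcnd⟩ := kkAux_fan_elim (hC hr)
    rcases lt_or_eq_of_le hle with h | h
    · exact h
    · exact absurd (kkAux_apex_char (hC hr) h ▸ hr) hap
  set g : ℝ × ℝ → ℝ := fun r => (r.1 - r.2) / (1 - 2 * r.2) with hg
  have hden : ∀ r ∈ C, (1 - 2 * r.2) ≠ 0 := fun r hr => by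
    have := hlt r hr; intro h; linarith
  have hgc : ContinuousOn g C := ContinuousOn.div (by fun_prop) (by fun_prop) hden
  have hgeq : ∀ r ∈ C, ∀ x : ℝ, r.1 = (1 - 2*r.2)*x + r.2 → g r = x := by
    intro r hr x h
    have hd := hden r hr
    rw [hg]; simp only
    rw [h]; field_simp; ring
  have hcond : ∀ r ∈ C, g r ∈ cantorSet ∧
      ((g r ∈ kkEndpoints ∧ ∃ q : ℚ, r.2 = (q : ℝ)) ∨
        (g r ∉ kkEndpoints ∧ Irrational r.2)) := by
    intro r hr
    obtain ⟨x, hx, _, _, h1, hc⟩ := kkAux_fan_elim (hC hr)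
    rw [hgeq r hr x h1]
    exact ⟨hx, hc⟩
  have himg : IsPreconnected (g '' C) := hpc.image g hgc
  have hsub : (g '' C).Subsingleton :=
    kkAux_cantorSet_td (by rintro _ ⟨r, hr, rfl⟩; exact (hcond r hr).1) himg
  intro p hp q hq
  have hgpq : ∀ r ∈ C, g r = g p := fun r hr =>
    hsub (mem_image_of_mem _ hr) (mem_image_of_mem _ hp)
  have hsnd : (Prod.snd '' C).Subsingleton := by
    have hpcs : IsPreconnected (Prod.snd '' C) := hpc.image _ continuous_snd.continuousOn
    by_cases hE : g p ∈ kkEndpoints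
    · refine kkAux_ratset_td ?_ hpcs
      rintro _ ⟨r, hr, rfl⟩
      rcases (hcond r hr).2 with ⟨_, hq'⟩ | ⟨hnE, _⟩
      · exact hq'
      · exact absurd (hgpq r hr ▸ hE) hnE
    · refine kkAux_irratset_td ?_ hpcs
      rintro _ ⟨r, hr, rfl⟩
      rcases (hcond r hr).2 with ⟨hE', _⟩ | ⟨_, hi⟩
      · exact absurd (hgpq r hr ▸ hE') hE
      · exact hi
  have h2 : p.2 = q.2 := hsnd (mem_image_of_mem _ hp) (mem_image_of_mem _ hq)
  obtain ⟨xp, _, _, _, hp1, _⟩ := kkAux_fan_elim (hC hp)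
  obtain ⟨xq, _, _, _, hq1, _⟩ := kkAux_fan_elim (hC hq)
  have hx : xp = xq := by
    rw [← hgeq p hp xp hp1, ← hgeq q hq xq hq1, hgpq q hq]
  have h1 : p.1 = q.1 := by rw [hp1, hq1, hx, h2]
  exact Prod.ext h1 h2

/-- A compact connected set with a dispersion point whose complement is totally
disconnected must be degenerate. -/
lemma kkAux_no_dispersion {S : Set (ℝ × ℝ)} (hc : IsCompact S) (hconn : IsPreconnected S)
    {p y : ℝ × ℝ} (hp : p ∈ S) (hy : y ∈ S) (hyp : y ≠ p)
    (htd : ∀ C : Set (ℝ × ℝ), C ⊆ S \ {p} → IsPreconnected C → C.Subsingleton) : False := by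
  haveI : CompactSpace S := isCompact_iff_compactSpace.mp hc
  set U : Set S := Subtype.val ⁻¹' ({p}ᶜ) with hUdef
  have hUopen : IsOpen U := isOpen_compl_singleton.preimage continuous_subtype_val
  haveI : LocallyCompactSpace U := hUopen.locallyCompactSpace
  haveI : TotallyDisconnectedSpace U := by
    constructor
    intro t _ ht
    set e : U → ℝ × ℝ := fun z => ((z : S) : ℝ × ℝ) with he
    have hec : Continuous e := continuous_subtype_val.comp continuous_subtype_val
    have himg : (e '' t).Subsingleton := by
      refine htd _ ?_ (ht.image e hec.continuousOn)
      rintro _ ⟨z, hz, rfl⟩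
      exact ⟨z.1.2, z.2⟩
    intro u hu v hv
    exact Subtype.ext (Subtype.ext (himg (mem_image_of_mem e hu) (mem_image_of_mem e hv)))
  set yS : S := ⟨y, hy⟩ with hyS
  have hyU : yS ∈ U := hyp
  set yU : U := ⟨yS, hyU⟩ with hyU2
  obtain ⟨K, hK, hyK, -⟩ := exists_compact_subset isOpen_univ (mem_univ yU)
  obtain ⟨W, hW, hyW, hWK⟩ :=
    (loc_compact_Haus_tot_disc_of_zero_dim).mem_nhds_iff.mp (isOpen_interior.mem_nhds hyK)
  have hWclopen : IsClopen W := hW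
  have hWcompact : IsCompact W :=
    hK.of_isClosed_subset hWclopen.isClosed (hWK.trans interior_subset)
  set W' : Set S := Subtype.val '' W with hW'
  have hW'open : IsOpen W' := hUopen.isOpenMap_subtype_val W hWclopen.isOpen
  set V : Set (ℝ × ℝ) := Subtype.val '' W' with hV
  have hVcompact : IsCompact V := (hWcompact.image continuous_subtype_val).image continuous_subtype_val
  have hVS : V ⊆ S := by rintro _ ⟨z, _, rfl⟩; exact z.2
  have hpV : p ∉ V := by
    rintro ⟨z, ⟨w, hw, rfl⟩, h⟩
    exact w.2 h
  have hyV : y ∈ V := ⟨yS, ⟨yU, hyW, rfl⟩, rfl⟩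
  have hSV : S \ V = Subtype.val '' (W'ᶜ : Set S) := by
    ext x
    constructor
    · rintro ⟨hxS, hxV⟩
      refine ⟨⟨x, hxS⟩, ?_, rfl⟩
      intro hmem
      exact hxV ⟨⟨x, hxS⟩, hmem, rfl⟩
    · rintro ⟨z, hz, rfl⟩
      refine ⟨z.2, ?_⟩
      rintro ⟨w, hw, hwz⟩
      exact hz (Subtype.ext hwz ▸ hw)
  have hSVclosed : IsClosed (S \ V) := by
    rw [hSV]
    exact ((hW'open.isClosed_compl.isCompact).image continuous_subtype_val).isClosed
  have hcover : S ⊆ V ∪ (S \ V) := by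
    intro x hx
    by_cases h : x ∈ V
    · exact Or.inl h
    · exact Or.inr ⟨hx, h⟩
  have hdisj : Disjoint V (S \ V) := disjoint_sdiff_self_right
  rcases (isPreconnected_iff_subset_of_fully_disjoint_closed hc.isClosed).mp hconn V (S \ V)
      hVcompact.isClosed hSVclosed hcover hdisj with hsub | hsub
  · exact hpV (hsub hp)
  · exact (hsub hy).2 hyV

/-- Every compact connected subset of the Knaster–Kuratowski fan is empty or a
singleton; i.e. the fan contains no nontrivial continuum. -/
theorem stmt_8 (S : Set (ℝ × ℝ)) (hS : S ⊆ kkFan) (hc : IsCompact S)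
    (hconn : IsPreconnected S) : S.Subsingleton := by
  by_cases hap : kkApex ∈ S
  · intro a ha b hb
    by_contra hne
    have : ∃ z ∈ S, z ≠ kkApex := by
      by_cases h : a = kkApex
      · exact ⟨b, hb, fun hb' => hne (h.trans hb'.symm)⟩
      · exact ⟨a, ha, h⟩
    obtain ⟨z, hz, hzap⟩ := this
    refine kkAux_no_dispersion hc hconn hap hz hzap ?_
    intro C hCsub hCpc
    refine kkAux_case1 (fun w hw => hS (hCsub hw).1) ?_ hCpc
    intro h
    exact (hCsub h).2 rfl
  · exact kkAux_case1 hS hap hconn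
end

section
/- For every Hausdorff space X and every natural number k, the collection X_{k+1} is contained in X_k, where X_n are the families of subsets arising in the definition of Abbott dimension. -/
open Set

namespace Abbott

variable {X : Type*} [TopologicalSpace X]

/-- `V` is an open subset of the subspace `Y`. -/
def OpenIn (Y V : Set X) : Prop := ∃ O : Set X, IsOpen O ∧ V = O ∩ Y

/-- The closure of `V` in the subspace `Y`. -/
def clIn (Y V : Set X) : Set X := closure V ∩ Y

/-- The boundary of `V` in the subspace `Y`. -/
def bdIn (Y V : Set X) : Set X := clIn Y V ∩ clIn Y (Y \ V)

/-- `𝒞(x, z, Y)`: the connected open subsets of the subspace `Y` containing both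
`x` and `z`. -/
def CC (x z : X) (Y : Set X) : Set (Set X) :=
  {V | OpenIn Y V ∧ IsConnected V ∧ x ∈ V ∧ z ∈ V}

/-- The families `X_n` of subsets of `X` from the definition of Abbott dimension:
`X_0` is the power set of `X`, and `Y ∈ X_{n+1}` iff there are `K ∈ X_n` with
`K ⊆ Y` and an observation point `z ∈ Y \ K` such that for every `x ∈ K` there is
a continuum (compact connected set) `W ⊆ Y` through `x` and `z` satisfying:
for every open neighbourhood `U` of `x` in `K` there is
`V ∈ 𝒞(x,z,Y)` containing `W` with `x ∈ V ∩ K ⊆ cl_Y(V) ∩ K ⊆ U`;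
`𝒞(x,z,Y)` contains a neighbourhood basis for `W` in `Y`; and for every
collection of such sets `V` there is an open neighbourhood `U` of `x` in `K` such
that each member `V` of the collection with `cl_Y(V) ∩ K ⊆ U` has a subset
`D ⊆ ∂_Y V` with `D ∈ X_n`. -/
def fam (X : Type*) [TopologicalSpace X] : ℕ → Set (Set X)
  | 0 => univ
  | (n + 1) => {Y | ∃ K ∈ fam X n, K ⊆ Y ∧ ∃ z ∈ Y \ K, ∀ x ∈ K,
      ∃ W : Set X, W ⊆ Y ∧ IsCompact W ∧ IsConnected W ∧ x ∈ W ∧ z ∈ W ∧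
        (∀ U : Set X, OpenIn K U → x ∈ U →
          ∃ V ∈ CC x z Y, W ⊆ V ∧ x ∈ V ∩ K ∧ clIn Y V ∩ K ⊆ U) ∧
        (∀ O : Set X, OpenIn Y O → W ⊆ O → ∃ V ∈ CC x z Y, W ⊆ V ∧ V ⊆ O) ∧
        (∀ 𝒱 : Set (Set X), (∀ V ∈ 𝒱, V ∈ CC x z Y ∧ W ⊆ V) →
          ∃ U : Set X, OpenIn K U ∧ x ∈ U ∧
            ∀ V ∈ 𝒱, clIn Y V ∩ K ⊆ U → ∃ D ⊆ bdIn Y V, D ∈ fam X n)}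

/-- The Abbott dimension of a (nonempty Hausdorff) space `X`: the greatest `n`
(as an element of `ℕ∞`) for which `X_n ≠ ∅`. -/
noncomputable def abbottDim (X : Type*) [TopologicalSpace X] : ℕ∞ :=
  sSup {e : ℕ∞ | ∃ n : ℕ, e = (n : ℕ∞) ∧ (fam X n).Nonempty}

end Abbott

/-- For every Hausdorff space `X` and every `k`, `X_{k+1} ⊆ X_k`. -/
theorem stmt_10 (X : Type*) [TopologicalSpace X] [T2Space X] (k : ℕ) :
    Abbott.fam X (k + 1) ⊆ Abbott.fam X k := by
  induction k with
  | zero => intro Y _; simp [Abbott.fam]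
  | succ n ih =>
    rintro Y ⟨K, hK, hKY, z, hz, h⟩
    refine ⟨K, ih hK, hKY, z, hz, fun x hx => ?_⟩
    obtain ⟨W, h1, h2, h3, h4, h5, h6, h7, h8⟩ := h x hx
    refine ⟨W, h1, h2, h3, h4, h5, h6, h7, fun 𝒱 h𝒱 => ?_⟩
    obtain ⟨U, hU1, hU2, hU3⟩ := h8 𝒱 h𝒱
    refine ⟨U, hU1, hU2, fun V hV hcl => ?_⟩
    obtain ⟨D, hD1, hD2⟩ := hU3 V hV hcl
    exact ⟨D, hD1, ih hD2⟩
end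

section
/- If X is a Hausdorff space and Y ⊆ X is a subspace, then Ab(Y) ≤ Ab(X), where Ab denotes Abbott dimension. -/
open Set

section Aux
set_option linter.unusedSectionVars false

open Abbott Set

variable {X : Type*} [TopologicalSpace X] {Y : Set X}

private lemma val_image_inter (s t : Set ↥Y) :
    (Subtype.val '' (s ∩ t) : Set X) = Subtype.val '' s ∩ Subtype.val '' t :=
  Set.image_inter Subtype.val_injective

private lemma image_subset_Y (A : Set ↥Y) : (Subtype.val '' A : Set X) ⊆ Y := by
  rintro p ⟨q, _, rfl⟩; exact q.2

private lemma image_preimage_val {V : Set X} (hV : V ⊆ Y) :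
    (Subtype.val '' (Subtype.val ⁻¹' V : Set ↥Y) : Set X) = V := by
  rw [Set.image_preimage_eq_inter_range, Subtype.range_val,
    Set.inter_eq_self_of_subset_left hV]

private lemma openIn_subset {S V : Set X} (h : OpenIn S V) : V ⊆ S := by
  obtain ⟨O, _, rfl⟩ := h; exact Set.inter_subset_right

private lemma openIn_image {K U : Set ↥Y} (h : OpenIn K U) :
    OpenIn (Subtype.val '' K : Set X) (Subtype.val '' U) := by
  obtain ⟨O, hO, rfl⟩ := h
  obtain ⟨O', hO', rfl⟩ := isOpen_induced_iff.mp hO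
  refine ⟨O', hO', ?_⟩
  rw [val_image_inter, Set.image_preimage_eq_inter_range, Subtype.range_val,
    Set.inter_assoc, Set.inter_eq_self_of_subset_right (image_subset_Y K)]

private lemma openIn_preimage {K : Set ↥Y} {U : Set X}
    (h : OpenIn (Subtype.val '' K : Set X) U) :
    OpenIn K (Subtype.val ⁻¹' U) ∧ (Subtype.val '' (Subtype.val ⁻¹' U : Set ↥Y) : Set X) = U := by
  obtain ⟨O, hO, rfl⟩ := h
  refine ⟨⟨Subtype.val ⁻¹' O, hO.preimage continuous_subtype_val, by
    rw [Set.preimage_inter, Set.preimage_image_eq K Subtype.val_injective]⟩, ?_⟩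
  exact image_preimage_val (Set.inter_subset_right.trans (image_subset_Y K))

private lemma clIn_image (A V : Set ↥Y) :
    (Subtype.val '' clIn A V : Set X) = clIn (Subtype.val '' A) (Subtype.val '' V) := by
  unfold clIn
  rw [Topology.IsInducing.subtypeVal.closure_eq_preimage_closure_image V, val_image_inter,
    Set.image_preimage_eq_inter_range, Subtype.range_val, Set.inter_assoc,
    Set.inter_eq_self_of_subset_right (image_subset_Y A)]

private lemma bdIn_image (A V : Set ↥Y) :
    (Subtype.val '' bdIn A V : Set X) = bdIn (Subtype.val '' A) (Subtype.val '' V) := by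
  unfold bdIn
  rw [val_image_inter, clIn_image, clIn_image, Set.image_diff Subtype.val_injective]

private lemma cc_image {x z : ↥Y} {A V : Set ↥Y} (h : V ∈ CC x z A) :
    (Subtype.val '' V : Set X) ∈ CC ↑x ↑z (Subtype.val '' A) :=
  ⟨openIn_image h.1, h.2.1.image _ continuous_subtype_val.continuousOn,
    ⟨x, h.2.2.1, rfl⟩, ⟨z, h.2.2.2, rfl⟩⟩

private lemma cc_preimage {x z : ↥Y} {A : Set ↥Y} {V : Set X}
    (h : V ∈ CC (↑x) (↑z) (Subtype.val '' A)) :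
    (Subtype.val ⁻¹' V : Set ↥Y) ∈ CC x z A := by
  obtain ⟨hVo, hVc, hxV, hzV⟩ := h
  have hVY : V ⊆ Y := (openIn_subset hVo).trans (image_subset_Y A)
  have heq : (Subtype.val '' (Subtype.val ⁻¹' V : Set ↥Y) : Set X) = V := image_preimage_val hVY
  refine ⟨?_, ⟨⟨x, hxV⟩, ?_⟩, hxV, hzV⟩
  · obtain ⟨O, hO, rfl⟩ := hVo
    exact ⟨Subtype.val ⁻¹' O, hO.preimage continuous_subtype_val, by
      rw [Set.preimage_inter, Set.preimage_image_eq A Subtype.val_injective]⟩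
  · exact Topology.IsInducing.subtypeVal.isPreconnected_image.mp (by rw [heq]; exact hVc.2)

private lemma fam_image : ∀ n (A : Set ↥Y), A ∈ fam ↥Y n →
    (Subtype.val '' A : Set X) ∈ fam X n
  | 0, _, _ => trivial
  | (n + 1), A, h => by
    obtain ⟨K, hK, hKA, z, hz, hmain⟩ := h
    refine ⟨Subtype.val '' K, fam_image n K hK, Set.image_mono hKA, ↑z,
      ⟨⟨z, hz.1, rfl⟩, ?_⟩, ?_⟩
    · rintro ⟨q, hq, hqz⟩
      exact hz.2 (Subtype.val_injective hqz ▸ hq)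
    · rintro x' ⟨x, hxK, rfl⟩
      obtain ⟨W, hWA, hWcpt, hWconn, hxW, hzW, hc1, hc2, hc3⟩ := hmain x hxK
      refine ⟨Subtype.val '' W, Set.image_mono hWA,
        hWcpt.image continuous_subtype_val,
        hWconn.image _ continuous_subtype_val.continuousOn,
        ⟨x, hxW, rfl⟩, ⟨z, hzW, rfl⟩, ?_, ?_, ?_⟩
      · intro U hU hxU
        obtain ⟨hU', hUeq⟩ := openIn_preimage hU
        obtain ⟨V, hVcc, hWV, hxVK, hclV⟩ := hc1 _ hU' hxU
        refine ⟨Subtype.val '' V, cc_image hVcc, Set.image_mono hWV,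
          ⟨⟨x, hxVK.1, rfl⟩, ⟨x, hxVK.2, rfl⟩⟩, ?_⟩
        rw [← clIn_image, ← val_image_inter]
        exact (Set.image_mono hclV).trans hUeq.subset
      · intro O hO hWO
        obtain ⟨hO', hOeq⟩ := openIn_preimage hO
        obtain ⟨V, hVcc, hWV, hVO⟩ := hc2 _ hO' (fun w hw => hWO ⟨w, hw, rfl⟩)
        exact ⟨Subtype.val '' V, cc_image hVcc, Set.image_mono hWV,
          (Set.image_mono hVO).trans hOeq.subset⟩
      · intro 𝒱 h𝒱
        have h𝒱' : ∀ V' ∈ (fun V => Subtype.val ⁻¹' V) '' 𝒱, V' ∈ CC x z A ∧ W ⊆ V' := by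
          rintro _ ⟨V, hV, rfl⟩
          exact ⟨cc_preimage (h𝒱 V hV).1, fun w hw => (h𝒱 V hV).2 ⟨w, hw, rfl⟩⟩
        obtain ⟨U', hU'o, hxU', hrest⟩ := hc3 ((fun V => Subtype.val ⁻¹' V) '' 𝒱) h𝒱'
        refine ⟨Subtype.val '' U', openIn_image hU'o, ⟨x, hxU', rfl⟩, ?_⟩
        intro V hV hcl
        have hVY : V ⊆ Y := (openIn_subset (h𝒱 V hV).1.1).trans (image_subset_Y A)
        have heqV : (Subtype.val '' (Subtype.val ⁻¹' V : Set ↥Y) : Set X) = V :=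
          image_preimage_val hVY
        have hsub : clIn A (Subtype.val ⁻¹' V) ∩ K ⊆ U' := by
          rw [← Set.image_subset_image_iff Subtype.val_injective,
            val_image_inter, clIn_image, heqV]
          exact hcl
        obtain ⟨D, hD, hDfam⟩ := hrest _ ⟨V, hV, rfl⟩ hsub
        refine ⟨Subtype.val '' D, ?_, fam_image n D hDfam⟩
        have := Set.image_mono (f := (Subtype.val : ↥Y → X)) hD
        rwa [bdIn_image, heqV] at this

end Aux

/-- If `X` is a Hausdorff space and `Y ⊆ X` is a subspace, then `Ab(Y) ≤ Ab(X)`. -/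
theorem stmt_11 (X : Type*) [TopologicalSpace X] [T2Space X] (Y : Set X) :
    Abbott.abbottDim ↥Y ≤ Abbott.abbottDim X := by
  apply sSup_le_sSup
  rintro e ⟨n, rfl, A, hA⟩
  exact ⟨n, rfl, Subtype.val '' A, fam_image n A hA⟩
end
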